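/- Let n, r be positive integers, λ > 0, Ω ⊆ {1,…,n}×{1,…,n}, and M ∈ ℝ^{n×n}. Let L_ncvx ∈ ℝ^{n×n} have rank r with compact SVD L_ncvx = UΣVᵀ and tangent space T, and suppose θ := ‖P_Ω(L_ncvx − M)‖_F > 0. Define R ∈ ℝ^{n×n} by θ^{−1}·P_Ω(L_ncvx − M) = −λ·(UVᵀ + R), and assume ‖P_{T⊥}(R)‖ ≤ 1/2. Let L_cvx be any minimizer over L ∈ ℝ^{n×n} of F(L) = ‖P_Ω(L − M)‖_F + λ‖L‖_*, and set Δ = L_cvx − L_ncvx. Then ‖P_{T⊥}(Δ)‖_* ≤ 2·‖P_T(R)‖_F·‖P_T(Δ)‖_F. -/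

import Mathlib

open MeasureTheory ProbabilityTheory Matrix
open scoped ENNReal

noncomputable section

/-- Frobenius norm of a real matrix. -/
def frobNorm {n m : ℕ} (A : Matrix (Fin n) (Fin m) ℝ) : ℝ :=
  Real.sqrt (∑ i, ∑ j, (A i j) ^ 2)

/-- Entrywise sup norm (largest absolute value of an entry). -/
def infNorm {n m : ℕ} (A : Matrix (Fin n) (Fin m) ℝ) : ℝ :=
  ⨆ i, ⨆ j, |A i j|

/-- Largest Euclidean norm of a row. -/
def row2InfNorm {n m : ℕ} (A : Matrix (Fin n) (Fin m) ℝ) : ℝ :=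
  ⨆ i, Real.sqrt (∑ j, (A i j) ^ 2)

/-- The (unsorted) singular values of a real matrix: square roots of the
eigenvalues of `Aᵀ * A`. -/
def singVal {n m : ℕ} (A : Matrix (Fin n) (Fin m) ℝ) : Fin m → ℝ :=
  fun j => Real.sqrt (((by simpa using Matrix.isHermitian_conjTranspose_mul_self A : (Aᵀ * A).IsHermitian)).eigenvalues j)

/-- Spectral norm: the largest singular value. -/
def specNorm {n m : ℕ} (A : Matrix (Fin n) (Fin m) ℝ) : ℝ :=
  ⨆ j, singVal A j

/-- Nuclear norm: the sum of the singular values. -/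
def nucNorm {n m : ℕ} (A : Matrix (Fin n) (Fin m) ℝ) : ℝ :=
  ∑ j, singVal A j

open Classical in
/-- Projection onto the observed entries. -/
def POmega {n : ℕ} (S : Set (Fin n × Fin n)) (A : Matrix (Fin n) (Fin n) ℝ) :
    Matrix (Fin n) (Fin n) ℝ :=
  fun i j => if (i, j) ∈ S then A i j else 0

/-- Trace inner product of two real matrices. -/
def minner {n m : ℕ} (A B : Matrix (Fin n) (Fin m) ℝ) : ℝ :=
  ∑ i, ∑ j, A i j * B i j

/-- The square-root matrix completion objective. -/
def sqF {n : ℕ} (S : Set (Fin n × Fin n)) (M : Matrix (Fin n) (Fin n) ℝ) (lam : ℝ)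
    (L : Matrix (Fin n) (Fin n) ℝ) : ℝ :=
  frobNorm (POmega S (L - M)) + lam * nucNorm L

/-- `X`-gradient of the nonconvex objective `g`. -/
def gradX {n r : ℕ} (S : Set (Fin n × Fin n)) (M : Matrix (Fin n) (Fin n) ℝ) (lam : ℝ)
    (X Y : Matrix (Fin n) (Fin r) ℝ) : Matrix (Fin n) (Fin r) ℝ :=
  (frobNorm (POmega S (X * Yᵀ - M)))⁻¹ • (POmega S (X * Yᵀ - M) * Y) + lam • X

/-- `Y`-gradient of the nonconvex objective `g`. -/
def gradY {n r : ℕ} (S : Set (Fin n × Fin n)) (M : Matrix (Fin n) (Fin n) ℝ) (lam : ℝ)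
    (X Y : Matrix (Fin n) (Fin r) ℝ) : Matrix (Fin n) (Fin r) ℝ :=
  (frobNorm (POmega S (X * Yᵀ - M)))⁻¹ • ((POmega S (X * Yᵀ - M))ᵀ * X) + lam • Y

/-- Frobenius norm of the full gradient of `g`. -/
def gradNorm {n r : ℕ} (S : Set (Fin n × Fin n)) (M : Matrix (Fin n) (Fin n) ℝ) (lam : ℝ)
    (X Y : Matrix (Fin n) (Fin r) ℝ) : ℝ :=
  Real.sqrt ((frobNorm (gradX S M lam X Y)) ^ 2 + (frobNorm (gradY S M lam X Y)) ^ 2)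

/-- Orthogonal projection onto the tangent space `T = {U Aᵀ + B Vᵀ}` (for `U, V` with
orthonormal columns), with respect to the trace inner product. -/
def projT {n r : ℕ} (U V : Matrix (Fin n) (Fin r) ℝ) (A : Matrix (Fin n) (Fin n) ℝ) :
    Matrix (Fin n) (Fin n) ℝ :=
  U * Uᵀ * A + A * (V * Vᵀ) - U * Uᵀ * A * (V * Vᵀ)

/-- Orthogonal projection onto the orthogonal complement of the tangent space. -/
def projTperp {n r : ℕ} (U V : Matrix (Fin n) (Fin r) ℝ) (A : Matrix (Fin n) (Fin n) ℝ) :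
    Matrix (Fin n) (Fin n) ℝ :=
  A - projT U V A

open Classical in
/-- Indicator (as a real random variable) that an entry is observed. -/
def obsInd {n : ℕ} {Ω₀ : Type} (Obs : Ω₀ → Set (Fin n × Fin n)) (k : Fin n × Fin n)
    (ω : Ω₀) : ℝ :=
  if k ∈ Obs ω then 1 else 0

end

noncomputable section
namespace SqrtMC

variable {n m r : ℕ}

/-! ### vector lemmas -/

def vnorm {m : ℕ} (x : Fin m → ℝ) : ℝ := Real.sqrt (x ⬝ᵥ x)

lemma dot_self_nonneg (x : Fin m → ℝ) : 0 ≤ x ⬝ᵥ x :=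
  Finset.sum_nonneg fun i _ => mul_self_nonneg _

lemma vnorm_nonneg (x : Fin m → ℝ) : 0 ≤ vnorm x := Real.sqrt_nonneg _

lemma vnorm_sq (x : Fin m → ℝ) : vnorm x ^ 2 = x ⬝ᵥ x := by
  rw [vnorm, Real.sq_sqrt (dot_self_nonneg x)]

lemma dot_le_vnorm_mul_vnorm (x y : Fin m → ℝ) : x ⬝ᵥ y ≤ vnorm x * vnorm y := by
  have h := Finset.sum_mul_sq_le_sq_mul_sq Finset.univ x y
  have h2 : (x ⬝ᵥ y) ^ 2 ≤ (vnorm x * vnorm y) ^ 2 := by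
    rw [mul_pow, vnorm_sq, vnorm_sq]
    simpa [dotProduct, pow_two] using h
  have h3 : 0 ≤ vnorm x * vnorm y := mul_nonneg (vnorm_nonneg x) (vnorm_nonneg y)
  nlinarith [h2, h3, sq_nonneg (x ⬝ᵥ y - vnorm x * vnorm y), sq_nonneg (x ⬝ᵥ y + vnorm x * vnorm y)]


/-! ### minner lemmas -/

lemma minner_comm (A B : Matrix (Fin n) (Fin m) ℝ) : minner A B = minner B A := by
  simp [minner, mul_comm]

lemma minner_add_right (A B C : Matrix (Fin n) (Fin m) ℝ) :
    minner A (B + C) = minner A B + minner A C := by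
  simp [minner, Matrix.add_apply, mul_add, Finset.sum_add_distrib]

lemma minner_add_left (A B C : Matrix (Fin n) (Fin m) ℝ) :
    minner (A + B) C = minner A C + minner B C := by
  simp [minner, Matrix.add_apply, add_mul, Finset.sum_add_distrib]

lemma minner_sub_right (A B C : Matrix (Fin n) (Fin m) ℝ) :
    minner A (B - C) = minner A B - minner A C := by
  simp [minner, Matrix.sub_apply, mul_sub, Finset.sum_sub_distrib]

lemma minner_smul_left (c : ℝ) (A B : Matrix (Fin n) (Fin m) ℝ) :
    minner (c • A) B = c * minner A B := by
  simp [minner, Matrix.smul_apply, Finset.mul_sum, mul_assoc, smul_eq_mul]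

lemma minner_zero_left (B : Matrix (Fin n) (Fin m) ℝ) : minner 0 B = 0 := by
  simp [minner]

lemma minner_sum_left {ι : Type*} (s : Finset ι) (f : ι → Matrix (Fin n) (Fin m) ℝ)
    (B : Matrix (Fin n) (Fin m) ℝ) :
    minner (∑ i ∈ s, f i) B = ∑ i ∈ s, minner (f i) B := by
  classical
  induction s using Finset.induction_on with
  | empty => simp [minner_zero_left]
  | insert _ _ h ih => rw [Finset.sum_insert h, Finset.sum_insert h, minner_add_left, ih]

lemma minner_self_eq_sq (A : Matrix (Fin n) (Fin m) ℝ) :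
    minner A A = frobNorm A ^ 2 := by
  rw [frobNorm, Real.sq_sqrt]
  · simp [minner, pow_two]
  · positivity

lemma frobNorm_nonneg (A : Matrix (Fin n) (Fin m) ℝ) : 0 ≤ frobNorm A := Real.sqrt_nonneg _

lemma minner_le_frob_mul_frob (A B : Matrix (Fin n) (Fin m) ℝ) :
    minner A B ≤ frobNorm A * frobNorm B := by
  classical
  have h := Finset.sum_mul_sq_le_sq_mul_sq (Finset.univ : Finset (Fin n × Fin m))
    (fun p => A p.1 p.2) (fun p => B p.1 p.2)
  simp only [Fintype.sum_prod_type] at h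
  have h2 : (minner A B) ^ 2 ≤ (frobNorm A * frobNorm B) ^ 2 := by
    rw [mul_pow, frobNorm, frobNorm, Real.sq_sqrt (by positivity), Real.sq_sqrt (by positivity)]
    simpa [minner] using h
  have h3 : 0 ≤ frobNorm A * frobNorm B := mul_nonneg (frobNorm_nonneg A) (frobNorm_nonneg B)
  nlinarith [h2, h3]

/-- minner as a trace . -/
lemma minner_eq_trace (A B : Matrix (Fin n) (Fin m) ℝ) :
    minner A B = Matrix.trace (Aᵀ * B) := by
  rw [Matrix.trace]
  simp only [Matrix.diag_apply, Matrix.mul_apply, Matrix.transpose_apply, minner]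
  rw [Finset.sum_comm]


lemma minner_sub_left (A B C : Matrix (Fin n) (Fin m) ℝ) :
    minner (A - B) C = minner A C - minner B C := by
  simp [minner, Matrix.sub_apply, sub_mul, Finset.sum_sub_distrib]

/-! ### POmega lemmas -/

lemma POmega_sub {S : Set (Fin n × Fin n)} (A B : Matrix (Fin n) (Fin n) ℝ) :
    POmega S (A - B) = POmega S A - POmega S B := by
  classical
  ext i j
  simp only [POmega, Matrix.sub_apply]
  split <;> simp

lemma minner_POmega_right {S : Set (Fin n × Fin n)} (A B : Matrix (Fin n) (Fin n) ℝ) :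
    minner (POmega S A) B = minner (POmega S A) (POmega S B) := by
  classical
  simp only [minner, POmega]
  refine Finset.sum_congr rfl fun i _ => Finset.sum_congr rfl fun j _ => ?_
  split <;> simp

/-! ### projT lemmas -/

variable {U V : Matrix (Fin n) (Fin r) ℝ}

lemma transpose_mul_projTperp (hU : Uᵀ * U = 1) (A : Matrix (Fin n) (Fin n) ℝ) :
    Uᵀ * projTperp U V A = 0 := by
  simp only [projTperp, projT, Matrix.mul_sub, Matrix.mul_add, ← Matrix.mul_assoc, hU,
    Matrix.one_mul]
  abel

lemma projTperp_mul_V (hV : Vᵀ * V = 1) (A : Matrix (Fin n) (Fin n) ℝ) :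
    projTperp U V A * V = 0 := by
  simp only [projTperp, projT, Matrix.sub_mul, Matrix.add_mul, Matrix.mul_assoc, hV,
    Matrix.mul_one]
  abel

lemma minner_UX_eq_zero {Z : Matrix (Fin n) (Fin n) ℝ} (X : Matrix (Fin r) (Fin n) ℝ)
    (hZ : Uᵀ * Z = 0) : minner (U * X) Z = 0 := by
  rw [minner_eq_trace, Matrix.transpose_mul, Matrix.mul_assoc, hZ]
  simp

lemma minner_YVt_eq_zero {Z : Matrix (Fin n) (Fin n) ℝ} (Y : Matrix (Fin n) (Fin r) ℝ)
    (hZ : Z * V = 0) : minner (Y * Vᵀ) Z = 0 := by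
  rw [minner_eq_trace, Matrix.transpose_mul, Matrix.transpose_transpose, Matrix.mul_assoc,
    Matrix.trace_mul_comm V (Yᵀ * Z), Matrix.mul_assoc, hZ]
  simp

lemma minner_projT_eq_zero (A Z : Matrix (Fin n) (Fin n) ℝ)
    (hZ1 : Uᵀ * Z = 0) (hZ2 : Z * V = 0) : minner (projT U V A) Z = 0 := by
  have h1 : minner (U * Uᵀ * A) Z = 0 := by
    rw [Matrix.mul_assoc]; exact minner_UX_eq_zero _ hZ1
  have h2 : minner (A * (V * Vᵀ)) Z = 0 := by
    rw [← Matrix.mul_assoc]; exact minner_YVt_eq_zero _ hZ2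
  have h3 : minner (U * Uᵀ * A * (V * Vᵀ)) Z = 0 := by
    rw [Matrix.mul_assoc U Uᵀ A, Matrix.mul_assoc]; exact minner_UX_eq_zero _ hZ1
  rw [projT, minner_sub_left, minner_add_left, h1, h2, h3]
  ring

lemma projT_add_projTperp (A : Matrix (Fin n) (Fin n) ℝ) :
    projT U V A + projTperp U V A = A := by
  rw [projTperp]; abel

lemma minner_decomp (hU : Uᵀ * U = 1) (hV : Vᵀ * V = 1) (R Δ : Matrix (Fin n) (Fin n) ℝ) :
    minner R Δ = minner (projT U V R) (projT U V Δ)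
      + minner (projTperp U V R) (projTperp U V Δ) := by
  have hR := projT_add_projTperp (U := U) (V := V) R
  have hΔ := projT_add_projTperp (U := U) (V := V) Δ
  have c1 : minner (projT U V R) (projTperp U V Δ) = 0 :=
    minner_projT_eq_zero _ _ (transpose_mul_projTperp hU Δ) (projTperp_mul_V hV Δ)
  have c2 : minner (projTperp U V R) (projT U V Δ) = 0 := by
    rw [minner_comm]
    exact minner_projT_eq_zero _ _ (transpose_mul_projTperp hU R) (projTperp_mul_V hV R)
  calc minner R Δ = minner (projT U V R + projTperp U V R) (projT U V Δ + projTperp U V Δ) := by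
        rw [hR, hΔ]
    _ = _ := by rw [minner_add_left, minner_add_right, minner_add_right, c1, c2]; ring

variable {n m : ℕ}

lemma hermT (A : Matrix (Fin n) (Fin m) ℝ) : (Aᵀ * A).IsHermitian := by
  simpa using Matrix.isHermitian_conjTranspose_mul_self A

def evec (A : Matrix (Fin n) (Fin m) ℝ) (j : Fin m) : Fin m → ℝ :=
  ⇑((hermT A).eigenvectorBasis j)

def eval (A : Matrix (Fin n) (Fin m) ℝ) (j : Fin m) : ℝ :=
  (hermT A).eigenvalues j

lemma evec_mulVec (A : Matrix (Fin n) (Fin m) ℝ) (j : Fin m) :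
    (Aᵀ * A) *ᵥ evec A j = eval A j • evec A j :=
  (hermT A).mulVec_eigenvectorBasis j

lemma evec_dot (A : Matrix (Fin n) (Fin m) ℝ) (i j : Fin m) :
    evec A i ⬝ᵥ evec A j = if i = j then 1 else 0 := by
  have h := orthonormal_iff_ite.mp
    (hermT A).eigenvectorBasis.orthonormal i j
  simpa [PiLp.inner_apply, RCLike.inner_apply, dotProduct, evec, mul_comm] using h

lemma dot_mulVec_mulVec (A : Matrix (Fin n) (Fin m) ℝ) (x y : Fin m → ℝ) :
    (A *ᵥ x) ⬝ᵥ (A *ᵥ y) = x ⬝ᵥ ((Aᵀ * A) *ᵥ y) := by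
  rw [Matrix.dotProduct_mulVec, Matrix.dotProduct_mulVec, ← Matrix.vecMul_vecMul,
    Matrix.vecMul_transpose]



/-! dot product sum helpers -/

lemma dot_sum_right {ι : Type*} (s : Finset ι) (x : Fin m → ℝ) (f : ι → Fin m → ℝ) :
    x ⬝ᵥ (∑ i ∈ s, f i) = ∑ i ∈ s, x ⬝ᵥ f i := by
  simp [dotProduct, Finset.sum_apply, Finset.mul_sum]
  rw [Finset.sum_comm]

lemma dot_sum_left {ι : Type*} (s : Finset ι) (x : Fin m → ℝ) (f : ι → Fin m → ℝ) :
    (∑ i ∈ s, f i) ⬝ᵥ x = ∑ i ∈ s, f i ⬝ᵥ x := by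
  simp [dotProduct, Finset.sum_apply, Finset.sum_mul]
  rw [Finset.sum_comm]

lemma mulVec_sum {ι : Type*} (s : Finset ι) (A : Matrix (Fin n) (Fin m) ℝ)
    (f : ι → Fin m → ℝ) : A *ᵥ (∑ i ∈ s, f i) = ∑ i ∈ s, A *ᵥ f i := by
  ext k
  simp [Matrix.mulVec, dot_sum_right]

/-! eigen/singular value basics -/

lemma eval_eq_dot (A : Matrix (Fin n) (Fin m) ℝ) (j : Fin m) :
    (A *ᵥ evec A j) ⬝ᵥ (A *ᵥ evec A j) = eval A j := by
  rw [dot_mulVec_mulVec, evec_mulVec, dotProduct_smul, smul_eq_mul, evec_dot]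
  simp

lemma eval_nonneg (A : Matrix (Fin n) (Fin m) ℝ) (j : Fin m) : 0 ≤ eval A j := by
  rw [← eval_eq_dot]
  exact Finset.sum_nonneg fun i _ => mul_self_nonneg _

lemma singVal_nonneg (A : Matrix (Fin n) (Fin m) ℝ) (j : Fin m) : 0 ≤ singVal A j :=
  Real.sqrt_nonneg _

lemma singVal_sq (A : Matrix (Fin n) (Fin m) ℝ) (j : Fin m) :
    singVal A j ^ 2 = eval A j := Real.sq_sqrt (eval_nonneg A j)

lemma mulVec_evec_dot (A : Matrix (Fin n) (Fin m) ℝ) (j : Fin m) :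
    (A *ᵥ evec A j) ⬝ᵥ (A *ᵥ evec A j) = singVal A j ^ 2 := by
  rw [singVal_sq, eval_eq_dot]

lemma mulVec_evec_eq_zero {A : Matrix (Fin n) (Fin m) ℝ} {j : Fin m}
    (h : singVal A j = 0) : A *ᵥ evec A j = 0 := by
  have h2 : (A *ᵥ evec A j) ⬝ᵥ (A *ᵥ evec A j) = 0 := by
    rw [mulVec_evec_dot, h]; ring
  exact dotProduct_self_eq_zero.mp h2

lemma evec_expansion (A : Matrix (Fin n) (Fin m) ℝ) (x : Fin m → ℝ) :
    ∑ j, (evec A j ⬝ᵥ x) • evec A j = x := by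
  have h := congrArg WithLp.ofLp (OrthonormalBasis.sum_repr'
    (hermT A).eigenvectorBasis (WithLp.toLp 2 x))
  simpa [PiLp.inner_apply, RCLike.inner_apply, dotProduct, evec, mul_comm] using h

lemma parseval (A : Matrix (Fin n) (Fin m) ℝ) (x : Fin m → ℝ) :
    x ⬝ᵥ x = ∑ j, (evec A j ⬝ᵥ x) ^ 2 := by
  have h : x ⬝ᵥ x = (∑ j, (evec A j ⬝ᵥ x) • evec A j) ⬝ᵥ x := by rw [evec_expansion]
  rw [h, dot_sum_left]
  refine Finset.sum_congr rfl fun j _ => ?_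
  rw [smul_dotProduct, smul_eq_mul, pow_two]



lemma singVal_le_specNorm (A : Matrix (Fin n) (Fin m) ℝ) (j : Fin m) :
    singVal A j ≤ specNorm A :=
  le_ciSup (Set.Finite.bddAbove (Set.finite_range _)) j

lemma specNorm_nonneg (A : Matrix (Fin n) (Fin m) ℝ) : 0 ≤ specNorm A :=
  Real.iSup_nonneg fun j => singVal_nonneg A j

lemma nucNorm_nonneg (A : Matrix (Fin n) (Fin m) ℝ) : 0 ≤ nucNorm A :=
  Finset.sum_nonneg fun j _ => singVal_nonneg A j

lemma vnorm_evec (A : Matrix (Fin n) (Fin m) ℝ) (j : Fin m) : vnorm (evec A j) = 1 := by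
  rw [vnorm, evec_dot]
  simp

lemma vnorm_mulVec_evec (A : Matrix (Fin n) (Fin m) ℝ) (j : Fin m) :
    vnorm (A *ᵥ evec A j) = singVal A j := by
  rw [vnorm, eval_eq_dot, singVal, eval]

lemma dot_mulVec_self_le (A : Matrix (Fin n) (Fin m) ℝ) (x : Fin m → ℝ) :
    (A *ᵥ x) ⬝ᵥ (A *ᵥ x) ≤ specNorm A ^ 2 * (x ⬝ᵥ x) := by
  have hx : x = ∑ j, (evec A j ⬝ᵥ x) • evec A j := (evec_expansion A x).symm
  have key : (A *ᵥ x) ⬝ᵥ (A *ᵥ x) = ∑ j, eval A j * (evec A j ⬝ᵥ x) ^ 2 := by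
    rw [dot_mulVec_mulVec]
    have h1 : (Aᵀ * A) *ᵥ x = ∑ j, ((evec A j ⬝ᵥ x) * eval A j) • evec A j := by
      conv_lhs => rw [hx]
      rw [mulVec_sum]
      refine Finset.sum_congr rfl fun j _ => ?_
      rw [Matrix.mulVec_smul, evec_mulVec, smul_smul, mul_comm (evec A j ⬝ᵥ x)]
    rw [h1, dot_sum_right]
    refine Finset.sum_congr rfl fun j _ => ?_
    rw [dotProduct_smul, smul_eq_mul, dotProduct_comm]
    ring
  rw [key, parseval A x, Finset.mul_sum]
  refine Finset.sum_le_sum fun j _ => ?_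
  have h1 : eval A j ≤ specNorm A ^ 2 := by
    rw [← singVal_sq]
    exact pow_le_pow_left₀ (singVal_nonneg A j) (singVal_le_specNorm A j) 2
  nlinarith [sq_nonneg (evec A j ⬝ᵥ x), eval_nonneg A j]

lemma vnorm_mulVec_le (A : Matrix (Fin n) (Fin m) ℝ) (x : Fin m → ℝ) :
    vnorm (A *ᵥ x) ≤ specNorm A * vnorm x := by
  rw [vnorm, vnorm]
  calc Real.sqrt ((A *ᵥ x) ⬝ᵥ (A *ᵥ x)) ≤ Real.sqrt (specNorm A ^ 2 * (x ⬝ᵥ x)) :=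
        Real.sqrt_le_sqrt (dot_mulVec_self_le A x)
    _ = specNorm A * Real.sqrt (x ⬝ᵥ x) := by
        rw [Real.sqrt_mul (sq_nonneg _), Real.sqrt_sq (specNorm_nonneg A)]

lemma specNorm_le_of_mulVec {A : Matrix (Fin n) (Fin m) ℝ} {c : ℝ} (hc : 0 ≤ c)
    (h : ∀ x, vnorm (A *ᵥ x) ≤ c * vnorm x) : specNorm A ≤ c := by
  refine Real.iSup_le (fun j => ?_) hc
  have := h (evec A j)
  rwa [vnorm_mulVec_evec, vnorm_evec, mul_one] at this


/-! ### dual matrix -/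

def dvec (A : Matrix (Fin n) (Fin m) ℝ) (j : Fin m) : Fin n → ℝ :=
  (singVal A j)⁻¹ • (A *ᵥ evec A j)

def dualMat (A : Matrix (Fin n) (Fin m) ℝ) : Matrix (Fin n) (Fin m) ℝ :=
  ∑ j, vecMulVec (dvec A j) (evec A j)

lemma dvec_eq_zero {A : Matrix (Fin n) (Fin m) ℝ} {j : Fin m} (h : singVal A j = 0) :
    dvec A j = 0 := by
  rw [dvec, mulVec_evec_eq_zero h, smul_zero]

lemma mulVec_evec_eq_smul_dvec (A : Matrix (Fin n) (Fin m) ℝ) (j : Fin m) :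
    A *ᵥ evec A j = singVal A j • dvec A j := by
  by_cases h : singVal A j = 0
  · rw [mulVec_evec_eq_zero h, dvec_eq_zero h, smul_zero]
  · rw [dvec, smul_smul, mul_inv_cancel₀ h, one_smul]

lemma dvec_dot_self (A : Matrix (Fin n) (Fin m) ℝ) (j : Fin m) :
    dvec A j ⬝ᵥ dvec A j = if singVal A j = 0 then 0 else 1 := by
  by_cases h : singVal A j = 0
  · rw [dvec_eq_zero h, zero_dotProduct, if_pos h]
  · rw [if_neg h, dvec, smul_dotProduct, dotProduct_smul, mulVec_evec_dot, smul_eq_mul,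
      smul_eq_mul]
    field_simp

lemma dvec_dot_ne {A : Matrix (Fin n) (Fin m) ℝ} {i j : Fin m} (h : i ≠ j) :
    dvec A i ⬝ᵥ dvec A j = 0 := by
  rw [dvec, dvec, smul_dotProduct, dotProduct_smul, dot_mulVec_mulVec, evec_mulVec,
    dotProduct_smul, evec_dot, if_neg h]
  simp

lemma dvec_dot_self_le_one (A : Matrix (Fin n) (Fin m) ℝ) (j : Fin m) :
    dvec A j ⬝ᵥ dvec A j ≤ 1 := by
  rw [dvec_dot_self]; split <;> norm_num

lemma vecMulVec_mulVec (u : Fin n → ℝ) (v : Fin m → ℝ) (x : Fin m → ℝ) :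
    vecMulVec u v *ᵥ x = (v ⬝ᵥ x) • u := by
  ext i
  simp [Matrix.mulVec, vecMulVec_apply, dotProduct, Finset.mul_sum, Finset.sum_mul, mul_assoc,
    mul_comm, mul_left_comm]

lemma dualMat_mulVec (A : Matrix (Fin n) (Fin m) ℝ) (x : Fin m → ℝ) :
    dualMat A *ᵥ x = ∑ j, (evec A j ⬝ᵥ x) • dvec A j := by
  rw [dualMat]
  have : (∑ j, vecMulVec (dvec A j) (evec A j)) *ᵥ x
      = ∑ j, vecMulVec (dvec A j) (evec A j) *ᵥ x := by
    ext i
    rw [Finset.sum_apply]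
    rw [Matrix.mulVec, show (fun j => (∑ c, vecMulVec (dvec A c) (evec A c)) i j)
      = ∑ c, (fun j => vecMulVec (dvec A c) (evec A c) i j) by
        funext j; rw [Matrix.sum_apply]; simp, dot_sum_left]
    rfl
  rw [this]
  exact Finset.sum_congr rfl fun j _ => vecMulVec_mulVec _ _ _

lemma specNorm_dualMat_le_one (A : Matrix (Fin n) (Fin m) ℝ) :
    specNorm (dualMat A) ≤ 1 := by
  refine specNorm_le_of_mulVec zero_le_one fun x => ?_
  have key : (dualMat A *ᵥ x) ⬝ᵥ (dualMat A *ᵥ x)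
      = ∑ j, (evec A j ⬝ᵥ x) ^ 2 * (dvec A j ⬝ᵥ dvec A j) := by
    rw [dualMat_mulVec, dot_sum_left]
    refine Finset.sum_congr rfl fun j _ => ?_
    rw [smul_dotProduct, dot_sum_right, Finset.sum_eq_single j]
    · rw [dotProduct_smul]; simp [pow_two]; ring
    · intro k _ hk
      rw [dotProduct_smul, smul_eq_mul, dvec_dot_ne (Ne.symm hk)]
      ring
    · simp
  have hle : (dualMat A *ᵥ x) ⬝ᵥ (dualMat A *ᵥ x) ≤ x ⬝ᵥ x := by
    rw [key, parseval A x]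
    refine Finset.sum_le_sum fun j _ => ?_
    nlinarith [sq_nonneg (evec A j ⬝ᵥ x), dvec_dot_self_le_one A j,
      dvec_dot_self A j]
  rw [vnorm, vnorm, one_mul]
  exact Real.sqrt_le_sqrt hle

lemma matrix_eq_sum_vecMulVec (A : Matrix (Fin n) (Fin m) ℝ) :
    A = ∑ j, vecMulVec (A *ᵥ evec A j) (evec A j) := by
  ext i k
  have h := congrFun (evec_expansion A (fun l => A i l)) k
  simp only [Finset.sum_apply, Pi.smul_apply, smul_eq_mul] at h
  rw [Matrix.sum_apply]
  rw [← h]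
  refine Finset.sum_congr rfl fun j _ => ?_
  rw [vecMulVec_apply, Matrix.mulVec, dotProduct, dotProduct]
  congr 1
  exact Finset.sum_congr rfl fun l _ => mul_comm _ _


/-! ### minner and singular values -/

lemma minner_vecMulVec_left (u : Fin n → ℝ) (v : Fin m → ℝ) (B : Matrix (Fin n) (Fin m) ℝ) :
    minner (vecMulVec u v) B = u ⬝ᵥ (B *ᵥ v) := by
  simp only [minner, vecMulVec_apply, Matrix.mulVec, dotProduct, Finset.mul_sum]
  exact Finset.sum_congr rfl fun i _ => Finset.sum_congr rfl fun j _ => by ring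

lemma minner_dualMat_self (A : Matrix (Fin n) (Fin m) ℝ) :
    minner (dualMat A) A = nucNorm A := by
  rw [dualMat, minner_sum_left, nucNorm]
  refine Finset.sum_congr rfl fun j _ => ?_
  rw [minner_vecMulVec_left, mulVec_evec_eq_smul_dvec, dotProduct_smul, smul_eq_mul,
    dvec_dot_self]
  by_cases h : singVal A j = 0
  · rw [if_pos h, h]; ring
  · rw [if_neg h]; ring

lemma minner_le_spec_mul_nuc (B A : Matrix (Fin n) (Fin m) ℝ) :
    minner B A ≤ specNorm B * nucNorm A := by
  have h0 : minner A B = ∑ j, (A *ᵥ evec A j) ⬝ᵥ (B *ᵥ evec A j) := by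
    have h1 := congrArg (fun X => minner X B) (matrix_eq_sum_vecMulVec A)
    rw [h1, minner_sum_left]
    exact Finset.sum_congr rfl fun j _ => minner_vecMulVec_left _ _ _
  rw [minner_comm, h0]
  have hbd : ∀ j, (A *ᵥ evec A j) ⬝ᵥ (B *ᵥ evec A j) ≤ singVal A j * specNorm B := by
    intro j
    calc (A *ᵥ evec A j) ⬝ᵥ (B *ᵥ evec A j)
        ≤ vnorm (A *ᵥ evec A j) * vnorm (B *ᵥ evec A j) := dot_le_vnorm_mul_vnorm _ _
      _ = singVal A j * vnorm (B *ᵥ evec A j) := by rw [vnorm_mulVec_evec]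
      _ ≤ singVal A j * (specNorm B * vnorm (evec A j)) := by
          exact mul_le_mul_of_nonneg_left (vnorm_mulVec_le B _) (singVal_nonneg A j)
      _ = singVal A j * specNorm B := by rw [vnorm_evec, mul_one]
  calc ∑ j, (A *ᵥ evec A j) ⬝ᵥ (B *ᵥ evec A j) ≤ ∑ j, singVal A j * specNorm B :=
        Finset.sum_le_sum fun j _ => hbd j
    _ = specNorm B * nucNorm A := by rw [← Finset.sum_mul, nucNorm, mul_comm]

/-! ### adjoint-type dot lemmas -/

lemma dot_mulVec_left (A : Matrix (Fin n) (Fin m) ℝ) (x : Fin m → ℝ) (w : Fin n → ℝ) :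
    (A *ᵥ x) ⬝ᵥ w = x ⬝ᵥ (Aᵀ *ᵥ w) := by
  rw [Matrix.dotProduct_mulVec, Matrix.vecMul_transpose]

lemma dot_mulVec_right (A : Matrix (Fin n) (Fin m) ℝ) (w : Fin n → ℝ) (x : Fin m → ℝ) :
    w ⬝ᵥ (A *ᵥ x) = (Aᵀ *ᵥ w) ⬝ᵥ x := by
  rw [dotProduct_comm, dot_mulVec_left, dotProduct_comm]

/-! ### vecMulVec algebra -/

lemma vecMulVec_zero_left (v : Fin m → ℝ) :
    vecMulVec (0 : Fin n → ℝ) v = 0 := by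
  ext i j; simp [vecMulVec_apply]

lemma mul_vecMulVec (B : Matrix (Fin r) (Fin n) ℝ) (u : Fin n → ℝ) (v : Fin m → ℝ) :
    B * vecMulVec u v = vecMulVec (B *ᵥ u) v := by
  ext i j
  simp [Matrix.mul_apply, vecMulVec_apply, Matrix.mulVec, dotProduct, Finset.sum_mul, mul_assoc]

lemma vecMulVec_mul (u : Fin n → ℝ) (v : Fin m → ℝ) (B : Matrix (Fin m) (Fin r) ℝ) :
    vecMulVec u v * B = vecMulVec u (Bᵀ *ᵥ v) := by
  ext i j
  simp only [Matrix.mul_apply, vecMulVec_apply, Matrix.mulVec, dotProduct,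
    Matrix.transpose_apply, Finset.mul_sum]
  exact Finset.sum_congr rfl fun k _ => by ring

lemma dualMat_dot (A : Matrix (Fin n) (Fin m) ℝ) (x : Fin m → ℝ) :
    (dualMat A *ᵥ x) ⬝ᵥ (dualMat A *ᵥ x)
      = ∑ j, (evec A j ⬝ᵥ x) ^ 2 * (dvec A j ⬝ᵥ dvec A j) := by
  rw [dualMat_mulVec, dot_sum_left]
  refine Finset.sum_congr rfl fun j _ => ?_
  rw [smul_dotProduct, dot_sum_right, Finset.sum_eq_single j]
  · rw [dotProduct_smul]; simp [pow_two]; ring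
  · intro k _ hk
    rw [dotProduct_smul, smul_eq_mul, dvec_dot_ne (Ne.symm hk)]
    ring
  · simp

lemma dd_nonneg (A : Matrix (Fin n) (Fin m) ℝ) (j : Fin m) :
    0 ≤ dvec A j ⬝ᵥ dvec A j := dot_self_nonneg _

lemma dd_idem (A : Matrix (Fin n) (Fin m) ℝ) (j : Fin m) :
    (dvec A j ⬝ᵥ dvec A j) * (dvec A j ⬝ᵥ dvec A j) = dvec A j ⬝ᵥ dvec A j := by
  rw [dvec_dot_self]; split <;> norm_num

/-! ### dual certificate -/

variable {Z : Matrix (Fin n) (Fin n) ℝ} {U' V' : Matrix (Fin n) (Fin r) ℝ}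

lemma sv_zero_of_eval_zero {A : Matrix (Fin n) (Fin m) ℝ} {j : Fin m}
    (h : eval A j = 0) : singVal A j = 0 := by
  have : singVal A j = Real.sqrt (eval A j) := rfl
  rw [this, h, Real.sqrt_zero]

lemma Ut_mul_dualMat (hZ1 : U'ᵀ * Z = 0) : U'ᵀ * dualMat Z = 0 := by
  rw [dualMat, Matrix.mul_sum]
  refine Finset.sum_eq_zero fun j _ => ?_
  rw [mul_vecMulVec, dvec, Matrix.mulVec_smul, Matrix.mulVec_mulVec, hZ1, Matrix.zero_mulVec,
    smul_zero, vecMulVec_zero_left]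

lemma Vt_mulVec_evec (hZ2 : Z * V' = 0) {j : Fin n} (h : singVal Z j ≠ 0) :
    V'ᵀ *ᵥ evec Z j = 0 := by
  have h1 : eval Z j ≠ 0 := fun hc => h (sv_zero_of_eval_zero hc)
  have h2 : evec Z j = (eval Z j)⁻¹ • ((Zᵀ * Z) *ᵥ evec Z j) := by
    rw [evec_mulVec, smul_smul, inv_mul_cancel₀ h1, one_smul]
  rw [h2, Matrix.mulVec_smul, Matrix.mulVec_mulVec, ← Matrix.mul_assoc,
    ← Matrix.transpose_mul, hZ2, Matrix.transpose_zero, Matrix.zero_mul,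
    Matrix.zero_mulVec, smul_zero]

lemma dualMat_mul_V (hZ2 : Z * V' = 0) : dualMat Z * V' = 0 := by
  rw [dualMat, Matrix.sum_mul]
  refine Finset.sum_eq_zero fun j _ => ?_
  rw [vecMulVec_mul]
  by_cases h : singVal Z j = 0
  · rw [dvec_eq_zero h, vecMulVec_zero_left]
  · rw [Vt_mulVec_evec hZ2 h]
    ext i c; simp [vecMulVec_apply]

lemma dd_zero_of_sv_zero {j : Fin n} (h : singVal Z j = 0) :
    dvec Z j ⬝ᵥ dvec Z j = 0 := by
  rw [dvec_eq_zero h, zero_dotProduct]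

lemma bessel_cert (hV' : V'ᵀ * V' = 1) (hZ2 : Z * V' = 0) (x : Fin n → ℝ) :
    (V'ᵀ *ᵥ x) ⬝ᵥ (V'ᵀ *ᵥ x) + ∑ j, (evec Z j ⬝ᵥ x) ^ 2 * (dvec Z j ⬝ᵥ dvec Z j)
      ≤ x ⬝ᵥ x := by
  set c : Fin n → ℝ := fun j => evec Z j ⬝ᵥ x with hc
  set dd : Fin n → ℝ := fun j => dvec Z j ⬝ᵥ dvec Z j with hdd
  set y : Fin r → ℝ := V'ᵀ *ᵥ x with hy
  set p : Fin n → ℝ := V' *ᵥ y + ∑ j, (dd j * c j) • evec Z j with hp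
  set s : ℝ := y ⬝ᵥ y + ∑ j, c j ^ 2 * dd j with hs
  have hVtv : ∀ j, dd j ≠ 0 → V'ᵀ *ᵥ evec Z j = 0 := by
    intro j h
    refine Vt_mulVec_evec hZ2 fun hsv => h ?_
    rw [hdd]; exact dd_zero_of_sv_zero hsv
  have hxp : x ⬝ᵥ p = s := by
    rw [hp, dotProduct_add, dot_sum_right, hs]
    congr 1
    · exact dot_mulVec_right V' x y
    · refine Finset.sum_congr rfl fun j _ => ?_
      rw [dotProduct_smul, smul_eq_mul, dotProduct_comm]
      change dd j * c j * c j = c j ^ 2 * dd j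
      ring
  have hpp : p ⬝ᵥ p = s := by
    rw [hp, add_dotProduct, dotProduct_add, dotProduct_add, dot_sum_right]
    have t11 : (V' *ᵥ y) ⬝ᵥ (V' *ᵥ y) = y ⬝ᵥ y := by
      rw [dot_mulVec_mulVec, hV', Matrix.one_mulVec]
    have t12 : ∀ j, (V' *ᵥ y) ⬝ᵥ ((dd j * c j) • evec Z j) = 0 := by
      intro j
      rw [dotProduct_smul, smul_eq_mul]
      by_cases h : dd j = 0
      · rw [h]; ring
      · rw [dot_mulVec_left, hVtv j h, dotProduct_zero]; ring
    have t21 : (∑ j, (dd j * c j) • evec Z j) ⬝ᵥ (V' *ᵥ y) = 0 := by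
      rw [dotProduct_comm, dot_sum_right]
      exact Finset.sum_eq_zero fun j _ => t12 j
    have t22 : (∑ j, (dd j * c j) • evec Z j) ⬝ᵥ (∑ j, (dd j * c j) • evec Z j)
        = ∑ j, c j ^ 2 * dd j := by
      rw [dot_sum_left]
      refine Finset.sum_congr rfl fun j _ => ?_
      rw [smul_dotProduct, dot_sum_right, Finset.sum_eq_single j]
      · rw [dotProduct_smul, evec_dot, if_pos rfl, smul_eq_mul, smul_eq_mul]
        have h5 : dd j * dd j = dd j := dd_idem Z j
        have h6 : dd j * c j * (dd j * c j * 1) = dd j * dd j * c j ^ 2 := by ring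
        rw [h6, h5]; ring
      · intro k _ hk
        rw [dotProduct_smul, evec_dot, if_neg (Ne.symm hk)]
        simp
      · simp
    rw [t11, t21, Finset.sum_congr rfl fun j _ => t12 j, t22, hs]
    simp
  have hs0 : 0 ≤ s := by
    rw [hs]
    have h1 : ∀ j, 0 ≤ c j ^ 2 * dd j := fun j =>
      mul_nonneg (sq_nonneg _) (dd_nonneg Z j)
    have := dot_self_nonneg y
    have := Finset.sum_nonneg fun j (_ : j ∈ Finset.univ) => h1 j
    linarith
  have h1 : s ≤ vnorm x * vnorm p := by
    rw [← hxp]; exact dot_le_vnorm_mul_vnorm x p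
  have h2 : vnorm p = Real.sqrt s := by rw [vnorm, hpp]
  have h3 : Real.sqrt s ^ 2 = s := Real.sq_sqrt hs0
  have h4 : x ⬝ᵥ x = vnorm x ^ 2 := (vnorm_sq x).symm
  rw [h4]
  nlinarith [h1, h2, h3, Real.sqrt_nonneg s, vnorm_nonneg x, sq_nonneg (vnorm x - Real.sqrt s)]

lemma specNorm_cert (hU' : U'ᵀ * U' = 1) (hV' : V'ᵀ * V' = 1) (hZ1 : U'ᵀ * Z = 0)
    (hZ2 : Z * V' = 0) : specNorm (U' * V'ᵀ + dualMat Z) ≤ 1 := by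
  refine specNorm_le_of_mulVec zero_le_one fun x => ?_
  rw [one_mul, vnorm, vnorm]
  refine Real.sqrt_le_sqrt ?_
  rw [Matrix.add_mulVec]
  set a := (U' * V'ᵀ) *ᵥ x with ha
  set b := dualMat Z *ᵥ x with hb
  have haa : a ⬝ᵥ a = (V'ᵀ *ᵥ x) ⬝ᵥ (V'ᵀ *ᵥ x) := by
    rw [ha, ← Matrix.mulVec_mulVec, dot_mulVec_mulVec, hU', Matrix.one_mulVec]
  have hab : a ⬝ᵥ b = 0 := by
    rw [ha, ← Matrix.mulVec_mulVec, dot_mulVec_left, hb, Matrix.mulVec_mulVec,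
      Ut_mul_dualMat hZ1, Matrix.zero_mulVec, dotProduct_zero]
  have hbb := dualMat_dot Z x
  have hbes := bessel_cert hV' hZ2 x
  have expand : (a + b) ⬝ᵥ (a + b) = a ⬝ᵥ a + 2 * (a ⬝ᵥ b) + b ⬝ᵥ b := by
    rw [add_dotProduct, dotProduct_add, dotProduct_add, dotProduct_comm b a]
    ring
  rw [expand, haa, hab, hbb]
  linarith [hbes]

/-! ### SVD computations -/

lemma minner_mul_svd (W : Matrix (Fin n) (Fin n) ℝ) (U' V' : Matrix (Fin n) (Fin r) ℝ)
    (Sg : Fin r → ℝ) :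
    minner W (U' * Matrix.diagonal Sg * V'ᵀ)
      = ∑ i, Sg i * ((fun k => V' k i) ⬝ᵥ (Wᵀ *ᵥ fun k => U' k i)) := by
  rw [minner_eq_trace, Matrix.trace_mul_comm, Matrix.mul_assoc (U' * Matrix.diagonal Sg) V'ᵀ Wᵀ,
    Matrix.trace_mul_comm, ← Matrix.mul_assoc (V'ᵀ * Wᵀ) U' (Matrix.diagonal Sg),
    Matrix.trace_mul_comm, Matrix.mul_assoc V'ᵀ Wᵀ U']
  rw [Matrix.trace]
  refine Finset.sum_congr rfl fun i _ => ?_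
  rw [Matrix.diag_apply, Matrix.diagonal_mul]
  rfl

lemma vnorm_col_eq_one {U' : Matrix (Fin n) (Fin r) ℝ} (hU' : U'ᵀ * U' = 1) (i : Fin r) :
    vnorm (fun k => U' k i) = 1 := by
  have h : (fun k => U' k i) ⬝ᵥ (fun k => U' k i) = 1 := by
    have h2 := congrFun (congrFun hU' i) i
    simpa [Matrix.mul_apply, Matrix.transpose_apply, Matrix.one_apply, dotProduct] using h2
  rw [vnorm, h, Real.sqrt_one]

lemma nucNorm_svd_le {U' V' : Matrix (Fin n) (Fin r) ℝ} {Sg : Fin r → ℝ}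
    (hU' : U'ᵀ * U' = 1) (hV' : V'ᵀ * V' = 1) (hSg : ∀ i, 0 ≤ Sg i) :
    nucNorm (U' * Matrix.diagonal Sg * V'ᵀ) ≤ ∑ i, Sg i := by
  set A := U' * Matrix.diagonal Sg * V'ᵀ with hA
  rw [← minner_dualMat_self A, hA, minner_mul_svd]
  refine Finset.sum_le_sum fun i _ => ?_
  have hdot : (fun k => V' k i) ⬝ᵥ ((dualMat A)ᵀ *ᵥ fun k => U' k i) ≤ 1 := by
    rw [← dot_mulVec_left]
    calc (dualMat A *ᵥ fun k => V' k i) ⬝ᵥ (fun k => U' k i)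
        ≤ vnorm (dualMat A *ᵥ fun k => V' k i) * vnorm (fun k => U' k i) :=
          dot_le_vnorm_mul_vnorm _ _
      _ ≤ (specNorm (dualMat A) * vnorm (fun k => V' k i)) * vnorm (fun k => U' k i) := by
          exact mul_le_mul_of_nonneg_right (vnorm_mulVec_le _ _) (vnorm_nonneg _)
      _ = specNorm (dualMat A) := by
          rw [vnorm_col_eq_one hU', vnorm_col_eq_one hV', mul_one, mul_one]
      _ ≤ 1 := specNorm_dualMat_le_one A
  calc Sg i * ((fun k => V' k i) ⬝ᵥ ((dualMat A)ᵀ *ᵥ fun k => U' k i)) ≤ Sg i * 1 :=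
        mul_le_mul_of_nonneg_left hdot (hSg i)
    _ = Sg i := mul_one _

lemma minner_UVt_svd {U' V' : Matrix (Fin n) (Fin r) ℝ} {Sg : Fin r → ℝ}
    (hU' : U'ᵀ * U' = 1) (hV' : V'ᵀ * V' = 1) :
    minner (U' * V'ᵀ) (U' * Matrix.diagonal Sg * V'ᵀ) = ∑ i, Sg i := by
  rw [minner_eq_trace, Matrix.transpose_mul, Matrix.transpose_transpose]
  have h : (V' * U'ᵀ) * (U' * Matrix.diagonal Sg * V'ᵀ)
      = V' * (Matrix.diagonal Sg * V'ᵀ) := by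
    simp only [Matrix.mul_assoc]
    rw [← Matrix.mul_assoc U'ᵀ U', hU', Matrix.one_mul]
  rw [h, Matrix.trace_mul_comm, Matrix.mul_assoc, Matrix.trace_mul_comm,
    hV', Matrix.one_mul, Matrix.trace_diagonal]

end SqrtMC
end

open SqrtMC

/-- The difference between a convex minimizer and the nonconvex point
lies primarily in the tangent space:
`‖P_{T⊥}(Δ)‖_* ≤ 2 ‖P_T(R)‖_F ‖P_T(Δ)‖_F`. -/
theorem sqrtMC_difference_in_tangent_space (n r : ℕ) (hn : 0 < n) (hr : 0 < r) (lam : ℝ)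
    (hlam : 0 < lam) (Ω : Set (Fin n × Fin n)) (M : Matrix (Fin n) (Fin n) ℝ)
    (U V : Matrix (Fin n) (Fin r) ℝ) (Sg : Fin r → ℝ)
    (Lncvx R Lcvx : Matrix (Fin n) (Fin n) ℝ)
    -- compact SVD of `L_ncvx` (in particular it has rank `r`)
    (hSVD : Lncvx = U * Matrix.diagonal Sg * Vᵀ)
    (hU : Uᵀ * U = 1) (hV : Vᵀ * V = 1) (hSg : ∀ i, 0 < Sg i)
    -- positive residual `θ` and definition of `R`
    (hθ : 0 < frobNorm (POmega Ω (Lncvx - M)))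
    (hR : (frobNorm (POmega Ω (Lncvx - M)))⁻¹ • POmega Ω (Lncvx - M) =
      (-lam) • (U * Vᵀ + R))
    (hRperp : specNorm (projTperp U V R) ≤ 1 / 2)
    -- `L_cvx` minimizes the convex objective `F`
    (hmin : ∀ L : Matrix (Fin n) (Fin n) ℝ, sqF Ω M lam Lcvx ≤ sqF Ω M lam L) :
    nucNorm (projTperp U V (Lcvx - Lncvx)) ≤
      2 * frobNorm (projT U V R) * frobNorm (projT U V (Lcvx - Lncvx)) := by
  classical
  set Δ : Matrix (Fin n) (Fin n) ℝ := Lcvx - Lncvx with hΔdef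
  set Zm : Matrix (Fin n) (Fin n) ℝ := projTperp U V Δ with hZm
  set a : Matrix (Fin n) (Fin n) ℝ := POmega Ω (Lncvx - M) with ha
  set θ : ℝ := frobNorm a with hθdef
  set b : Matrix (Fin n) (Fin n) ℝ := POmega Ω (Lcvx - M) with hb
  -- step A : Cauchy-Schwarz on the residual
  have hab : minner a b ≤ θ * frobNorm b := by
    calc minner a b ≤ frobNorm a * frobNorm b := minner_le_frob_mul_frob a b
      _ = θ * frobNorm b := by rw [hθdef]
  have haa : minner a a = θ ^ 2 := by rw [minner_self_eq_sq, hθdef]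
  have haΔ : minner a Δ = minner a b - θ ^ 2 := by
    have h1 : minner a Δ = minner a (POmega Ω Δ) := minner_POmega_right _ _
    have h2 : POmega Ω Δ = b - a := by
      rw [hb, ha, ← POmega_sub]
      congr 1
      rw [hΔdef]
      abel
    rw [h1, h2, minner_sub_right, haa]
  have hstepA : θ⁻¹ * minner a Δ ≤ frobNorm b - θ := by
    rw [haΔ]
    have hθpos : 0 < θ := hθ
    have h3 : θ⁻¹ * (minner a b - θ ^ 2) ≤ θ⁻¹ * (θ * frobNorm b - θ ^ 2) :=
      mul_le_mul_of_nonneg_left (by linarith) (inv_nonneg.mpr hθpos.le)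
    have h4 : θ⁻¹ * (θ * frobNorm b - θ ^ 2) = frobNorm b - θ := by
      field_simp
    linarith
  have hGΔ : θ⁻¹ * minner a Δ = -lam * (minner (U * Vᵀ) Δ + minner R Δ) := by
    have h1 : minner (θ⁻¹ • a) Δ = θ⁻¹ * minner a Δ := minner_smul_left _ _ _
    have h2 : minner ((-lam) • (U * Vᵀ + R)) Δ
        = -lam * (minner (U * Vᵀ) Δ + minner R Δ) := by
      rw [minner_smul_left, minner_add_left]
    rw [← h1, hR, h2]
  -- step B : dual certificate
  have hZ1 : Uᵀ * Zm = 0 := transpose_mul_projTperp hU Δ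
  have hZ2 : Zm * V = 0 := projTperp_mul_V hV Δ
  set W : Matrix (Fin n) (Fin n) ℝ := dualMat Zm with hW
  have hWU : Uᵀ * W = 0 := Ut_mul_dualMat hZ1
  have hWV : W * V = 0 := dualMat_mul_V hZ2
  have hcert : specNorm (U * Vᵀ + W) ≤ 1 := specNorm_cert hU hV hZ1 hZ2
  have hdual : minner (U * Vᵀ + W) Lcvx ≤ nucNorm Lcvx := by
    calc minner (U * Vᵀ + W) Lcvx ≤ specNorm (U * Vᵀ + W) * nucNorm Lcvx :=
          minner_le_spec_mul_nuc _ _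
      _ ≤ 1 * nucNorm Lcvx := mul_le_mul_of_nonneg_right hcert (nucNorm_nonneg _)
      _ = nucNorm Lcvx := one_mul _
  have hLcvx : Lcvx = Lncvx + Δ := by rw [hΔdef]; abel
  have hUVLn : minner (U * Vᵀ) Lncvx = ∑ i, Sg i := by
    rw [hSVD]; exact minner_UVt_svd hU hV
  have hWLn : minner W Lncvx = 0 := by
    rw [hSVD, Matrix.mul_assoc, minner_comm]
    exact minner_UX_eq_zero _ hWU
  have hWΔ : minner W Δ = nucNorm Zm := by
    have hsplit : Δ = projT U V Δ + Zm := (projT_add_projTperp Δ).symm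
    have h1 : minner W Δ = minner W (projT U V Δ) + minner W Zm := by
      conv_lhs => rw [hsplit]
      rw [minner_add_right]
    have h2 : minner W (projT U V Δ) = 0 := by
      rw [minner_comm]
      exact minner_projT_eq_zero _ _ hWU hWV
    rw [h1, h2, minner_dualMat_self, zero_add]
  have hnucLn : nucNorm Lncvx ≤ ∑ i, Sg i := by
    rw [hSVD]; exact nucNorm_svd_le hU hV fun i => (hSg i).le
  have hBkey : ∑ i, Sg i + minner (U * Vᵀ) Δ + nucNorm Zm ≤ nucNorm Lcvx := by
    have h5 : minner (U * Vᵀ + W) Lcvx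
        = ∑ i, Sg i + minner (U * Vᵀ) Δ + nucNorm Zm := by
      rw [hLcvx, minner_add_right, minner_add_left, minner_add_left, hUVLn, hWLn, hWΔ]
      ring
    linarith [hdual]
  -- minimality
  have hmin' : frobNorm b + lam * nucNorm Lcvx ≤ θ + lam * nucNorm Lncvx := by
    have h := hmin Lncvx
    simp only [sqF] at h
    rw [← hb] at h
    rw [← ha, ← hθdef] at h
    exact h
  -- combine to get the key bound
  have hkey : nucNorm Zm ≤ minner R Δ := by
    have g1 : minner (U * Vᵀ) Δ + nucNorm Zm ≤ nucNorm Lcvx - nucNorm Lncvx := by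
      linarith
    have g2 : lam * (minner (U * Vᵀ) Δ + nucNorm Zm)
        ≤ lam * (nucNorm Lcvx - nucNorm Lncvx) :=
      mul_le_mul_of_nonneg_left g1 hlam.le
    have g3 : θ - frobNorm b ≤ lam * (minner (U * Vᵀ) Δ + minner R Δ) := by
      have := hstepA
      rw [hGΔ] at this
      linarith
    have g4 : lam * (nucNorm Lcvx - nucNorm Lncvx) ≤ θ - frobNorm b := by linarith
    have g5 : lam * (minner (U * Vᵀ) Δ + nucNorm Zm)
        ≤ lam * (minner (U * Vᵀ) Δ + minner R Δ) := by linarith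
    have g6 := (mul_le_mul_iff_right₀ hlam).mp g5
    linarith
  -- step C
  have hdecomp := minner_decomp hU hV R Δ
  have hC1 : minner (projT U V R) (projT U V Δ)
      ≤ frobNorm (projT U V R) * frobNorm (projT U V Δ) := minner_le_frob_mul_frob _ _
  have hC2 : minner (projTperp U V R) Zm ≤ 1 / 2 * nucNorm Zm := by
    calc minner (projTperp U V R) Zm ≤ specNorm (projTperp U V R) * nucNorm Zm :=
          minner_le_spec_mul_nuc _ _
      _ ≤ 1 / 2 * nucNorm Zm := mul_le_mul_of_nonneg_right hRperp (nucNorm_nonneg _)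
  have hfin : 2 * frobNorm (projT U V R) * frobNorm (projT U V Δ)
      = 2 * (frobNorm (projT U V R) * frobNorm (projT U V Δ)) := by ring
  rw [hfin]
  linarith [hkey, hdecomp, hC1, hC2]
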